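/- Let m be a positive integer and p a prime not dividing m. Then in the polynomial ring (ZMod p)[X] one has (-X)^m · ∑_{n=1}^{p-1} ((-m)⁻¹)^n · T_n(X) = -X^p · ∑_{l=0}^{m-1} ((m-1)!/l!) · (-X)^l, where T_n(X) denotes the image in (ZMod p)[X] of the n-th Touchard polynomial and (m-1)!/l! is the integer ∏_{s=l+1}^{m-1} s. -/
import Mathlib


open Polynomial

/-- The Touchard polynomials in `ℤ[X]`, determined by `touchard 0 = 1` and
`touchard (n+1) = X * ∑_{k=0}^{n} C(n,k) * touchard k`. -/
noncomputable def touchard : ℕ → ℤ[X]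
  | 0 => 1
  | n + 1 => X * ∑ k ∈ (Finset.range (n + 1)).attach, (n.choose k : ℤ[X]) * touchard k
decreasing_by exact Finset.mem_range.mp k.2

lemma touchard_zero : touchard 0 = 1 := by simp [touchard]

lemma touchard_succ (n : ℕ) :
    touchard (n + 1) = X * ∑ k ∈ Finset.range (n + 1), (n.choose k : ℤ[X]) * touchard k := by
  rw [touchard]
  congr 1
  exact Finset.sum_attach (Finset.range (n+1)) (fun k => (n.choose k : ℤ[X]) * touchard k)

lemma touchard_key (n : ℕ) :
    touchard n + derivative (touchard n)
      = ∑ k ∈ Finset.range (n + 1), (n.choose k : ℤ[X]) * touchard k := by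
  induction n using Nat.strong_induction_on with
  | _ n ih =>
    match n with
    | 0 => simp [touchard]
    | n + 1 =>
      set S : ℕ → ℤ[X] := fun j => ∑ k ∈ Finset.range (j + 1), (j.choose k : ℤ[X]) * touchard k
        with hS
      have hder : ∀ j, derivative (S j) = ∑ k ∈ Finset.range (j + 1),
          (j.choose k : ℤ[X]) * derivative (touchard k) := by
        intro j
        rw [hS]
        simp only [derivative_sum, derivative_mul, Polynomial.derivative_natCast, zero_mul,
          zero_add]
      have hderT : ∀ k, k < n + 1 → derivative (touchard k) = S k - touchard k := by
        intro k hk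
        have := ih k hk
        rw [hS]
        linear_combination this
      -- derivative of S n via ih
      have hSn' : derivative (S n) = ∑ k ∈ Finset.range (n + 1),
          (n.choose k : ℤ[X]) * (S k - touchard k) := by
        rw [hder]
        apply Finset.sum_congr rfl
        intro k hk
        rw [hderT k (Finset.mem_range.mp hk)]
      have hT : touchard (n + 1) = X * S n := touchard_succ n
      have hT' : derivative (touchard (n + 1)) = S n + X * derivative (S n) := by
        rw [hT, derivative_mul, derivative_X, one_mul]
      rw [hT', hT, hSn']
      -- RHS manipulation
      have hRHS : ∑ k ∈ Finset.range (n + 2), ((n+1).choose k : ℤ[X]) * touchard k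
          = S n + ∑ k ∈ Finset.range (n + 1), (n.choose k : ℤ[X]) * (X * S k) := by
        rw [Finset.sum_range_succ' (fun k => ((n+1).choose k : ℤ[X]) * touchard k) (n+1)]
        have h1 : ∀ k, ((n+1).choose (k+1) : ℤ[X]) = (n.choose k : ℤ[X]) + (n.choose (k+1) : ℤ[X]) := by
          intro k; rw [Nat.choose_succ_succ]; push_cast; ring
        have h2 : ∀ k ∈ Finset.range (n+1), ((n+1).choose (k+1) : ℤ[X]) * touchard (k+1)
            = (n.choose k : ℤ[X]) * (X * S k) + (n.choose (k+1) : ℤ[X]) * touchard (k+1) := by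
          intro k _
          rw [h1 k, add_mul, touchard_succ k]
        rw [Finset.sum_congr rfl h2, Finset.sum_add_distrib]
        have h3 : ∑ k ∈ Finset.range (n+1), (n.choose (k+1) : ℤ[X]) * touchard (k+1)
            + ((n+1).choose 0 : ℤ[X]) * touchard 0 = S n := by
          have h4 : S n = ∑ k ∈ Finset.range (n + 2), (n.choose k : ℤ[X]) * touchard k := by
            rw [hS]
            rw [Finset.sum_range_succ (fun k => (n.choose k : ℤ[X]) * touchard k) (n+1)]
            simp [Nat.choose_succ_self]
          rw [h4, Finset.sum_range_succ' (fun k => (n.choose k : ℤ[X]) * touchard k) (n+1)]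
          simp [touchard]
        rw [add_assoc, h3]
        ring
      rw [hRHS]
      rw [Finset.mul_sum, Finset.mul_sum]
      have hcomb : ∀ k ∈ Finset.range (n+1), (n.choose k : ℤ[X]) * (X * S k)
          = X * ((n.choose k : ℤ[X]) * touchard k)
            + X * ((n.choose k : ℤ[X]) * (S k - touchard k)) := fun k _ => by ring
      rw [Finset.sum_congr rfl hcomb, Finset.sum_add_distrib]
      ring

lemma touchard_rec (n : ℕ) :
    touchard (n + 1) = X * (touchard n + derivative (touchard n)) := by
  rw [touchard_key, touchard_succ]


def st : ℕ → ℕ → ℕ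
  | 0, 0 => 1
  | 0, _ + 1 => 0
  | _ + 1, 0 => 0
  | n + 1, k + 1 => st n k + (k + 1) * st n (k + 1)

lemma st_zero (n : ℕ) : st (n + 1) 0 = 0 := rfl
lemma st_zero_zero : st 0 0 = 1 := rfl
lemma st_zero_succ (k : ℕ) : st 0 (k + 1) = 0 := rfl
lemma st_succ (n k : ℕ) : st (n + 1) (k + 1) = st n k + (k + 1) * st n (k + 1) := rfl

lemma st_of_lt : ∀ n k, n < k → st n k = 0 := by
  intro n
  induction n with
  | zero => intro k hk; match k, hk with | k+1, _ => rfl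
  | succ n ih =>
    intro k hk
    match k, hk with
    | k+1, hk =>
      have h1 : n < k := by omega
      have h2 : n < k + 1 := by omega
      show st n k + (k+1) * st n (k+1) = 0
      rw [ih k h1, ih (k+1) h2]; ring

lemma st_self : ∀ n, st n n = 1 := by
  intro n
  induction n with
  | zero => rfl
  | succ n ih =>
    show st n n + (n+1) * st n (n+1) = 1
    rw [ih, st_of_lt n (n+1) (by omega)]; ring

lemma st_one : ∀ n, st (n + 1) 1 = 1 := by
  intro n
  induction n with
  | zero => rfl
  | succ n ih =>
    show st (n+1) 0 + 1 * st (n+1) 1 = 1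
    rw [st_zero, ih]

lemma xder (a : ℤ) (k : ℕ) : X * derivative (C a * X ^ k) = C (a * k) * X ^ k := by
  cases k with
  | zero => simp
  | succ k =>
    rw [derivative_C_mul, derivative_X_pow]
    push_cast
    rw [C_mul, pow_succ]
    ring

lemma touchard_eq (n : ℕ) :
    touchard n = ∑ k ∈ Finset.range (n + 1), C (st n k : ℤ) * X ^ k := by
  induction n with
  | zero => simp [touchard_zero, st_zero_zero]
  | succ n ih =>
    rw [touchard_rec, ih]
    rw [Finset.sum_range_succ' (fun k => C (st (n+1) k : ℤ) * X ^ k) (n+1)]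
    rw [st_zero]
    simp only [Nat.cast_zero, map_zero, zero_mul, pow_zero, mul_one, add_zero]
    have h1 : ∀ k ∈ Finset.range (n+1), C (st (n+1) (k+1) : ℤ) * X ^ (k+1)
        = X * (C (st n k : ℤ) * X ^ k) + C ((st n (k+1) : ℤ) * (k+1)) * X ^ (k+1) := by
      intro k _
      rw [st_succ]
      push_cast
      rw [map_add]
      ring
    rw [Finset.sum_congr rfl h1, Finset.sum_add_distrib]
    rw [mul_add, Finset.mul_sum, derivative_sum, Finset.mul_sum]
    congr 1
    -- second sums equal
    rw [Finset.sum_congr rfl (fun k _ => xder (st n k : ℤ) k)]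
    rw [Finset.sum_range_succ' (fun k => C ((st n k : ℤ) * k) * X ^ k) n]
    rw [Finset.sum_range_succ (fun k => C ((st n (k+1) : ℤ) * (k+1)) * X ^ (k+1)) n]
    rw [st_of_lt n (n+1) (by omega)]
    push_cast
    simp

lemma st_formula : ∀ n k : ℕ, (k.factorial : ℤ) * st n k
    = ∑ j ∈ Finset.range (k + 1), (-1) ^ (k - j) * (k.choose j) * (j : ℤ) ^ n := by
  intro n
  induction n with
  | zero =>
    intro k
    cases k with
    | zero => simp [st_zero_zero]
    | succ k =>
      rw [st_zero_succ]
      simp only [Nat.cast_zero, mul_zero, pow_zero, mul_one]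
      rw [← Finset.sum_range_reflect (fun j => (-1:ℤ) ^ ((k+1) - j) * ((k+1).choose j)) (k+2)]
      have h : ∀ j ∈ Finset.range (k+2),
          (-1:ℤ) ^ ((k+1) - ((k + 2 - 1) - j)) * ((k+1).choose ((k + 2 - 1) - j))
          = (-1) ^ j * ((k+1).choose j) := by
        intro j hj
        have hj' : j ≤ k + 1 := by have := Finset.mem_range.mp hj; omega
        have h1 : (k+1) - ((k + 2 - 1) - j) = j := by omega
        have h2 : k + 2 - 1 = k + 1 := by omega
        rw [h1, h2, Nat.choose_symm hj']
      rw [Finset.sum_congr rfl h]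
      rw [Int.alternating_sum_range_choose]
      simp
  | succ n ih =>
    intro k
    cases k with
    | zero =>
      rw [st_zero]
      simp
    | succ k =>
      rw [st_succ]
      push_cast
      rw [mul_add]
      have e1 : ((k+1).factorial : ℤ) * st n k = (k+1) * ((k.factorial : ℤ) * st n k) := by
        rw [Nat.factorial_succ]; push_cast; ring
      have e2 : ((k+1).factorial : ℤ) * ((k+1) * st n (k+1))
          = (k+1) * (((k+1).factorial : ℤ) * st n (k+1)) := by push_cast; ring
      rw [e1, e2, ih k, ih (k+1), ← mul_add]
      have hA : ∑ j ∈ Finset.range (k + 1), (-1:ℤ) ^ (k - j) * (k.choose j) * (j:ℤ) ^ n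
          = ∑ j ∈ Finset.range (k + 2), (-1:ℤ) ^ (k - j) * (k.choose j) * (j:ℤ) ^ n := by
        rw [Finset.sum_range_succ (fun j => (-1:ℤ) ^ (k - j) * (k.choose j) * (j:ℤ) ^ n) (k+1)]
        rw [Nat.choose_succ_self]
        push_cast; ring
      rw [hA, ← Finset.sum_add_distrib]
      have hAB : ∀ j ∈ Finset.range (k+2),
          (-1:ℤ) ^ (k - j) * (k.choose j) * (j:ℤ) ^ n
            + (-1:ℤ) ^ (k + 1 - j) * ((k+1).choose j) * (j:ℤ) ^ n
          = (if j = 0 then 0 else (-1:ℤ) ^ (k + 1 - j) * (k.choose (j-1)) * (j:ℤ) ^ n) := by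
        intro j hj
        rcases Nat.eq_zero_or_pos j with rfl | hj0
        · rw [if_pos rfl]
          have hs : (-1:ℤ) ^ (k + 1 - 0) = -(-1:ℤ) ^ (k - 0) := by
            rw [Nat.sub_zero, Nat.sub_zero, pow_succ]; ring
          rw [hs]
          simp only [Nat.choose_zero_right, Nat.cast_one]
          ring
        · rw [if_neg (by omega)]
          have hjk : j ≤ k + 1 := by have := Finset.mem_range.mp hj; omega
          rcases Nat.lt_or_ge j (k+1) with hlt | hge
          · have hs : (-1:ℤ) ^ (k + 1 - j) = -(-1:ℤ) ^ (k - j) := by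
              have : k + 1 - j = (k - j) + 1 := by omega
              rw [this, pow_succ]; ring
            have hc : ((k+1).choose j : ℤ) = (k.choose j : ℤ) + (k.choose (j-1) : ℤ) := by
              have hj1 : j = (j - 1) + 1 := by omega
              rw [hj1, Nat.choose_succ_succ]
              push_cast; ring
            rw [hs, hc]; ring
          · have hj' : j = k + 1 := by omega
            subst hj'
            simp only [Nat.choose_succ_self, Nat.add_sub_cancel_left, Nat.add_sub_cancel,
              Nat.cast_zero, Nat.choose_self, Nat.cast_one]
            norm_num
      rw [Finset.sum_congr rfl hAB]
      rw [Finset.sum_range_succ' (fun j => if j = 0 then (0:ℤ)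
        else (-1:ℤ) ^ (k + 1 - j) * (k.choose (j-1)) * (j:ℤ) ^ n) (k+1)]
      simp only [if_true, if_false, Nat.succ_ne_zero, ite_true, ite_false, add_zero]
      rw [Finset.mul_sum]
      rw [Finset.sum_range_succ' (fun j => (-1:ℤ) ^ (k + 1 - j) * ((k+1).choose j) * (j:ℤ) ^ (n+1)) (k+1)]
      have h0 : (-1:ℤ) ^ (k + 1 - 0) * ((k+1).choose 0) * ((0:ℕ):ℤ) ^ (n+1) = 0 := by
        simp [zero_pow (Nat.succ_ne_zero n)]
      rw [h0, add_zero]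
      apply Finset.sum_congr rfl
      intro i _
      have hsub : k + 1 - (i + 1) = k - i := by omega
      have hch : ((k:ℤ) + 1) * (k.choose i) = ((k+1).choose (i+1) : ℤ) * ((i:ℤ) + 1) := by
        have h2 := congrArg (fun t : ℕ => (t : ℤ)) (Nat.add_one_mul_choose_eq k i)
        push_cast at h2
        linarith
      rw [hsub]
      push_cast
      rw [pow_succ]
      linear_combination ((-1:ℤ) ^ (k - i) * ((i:ℤ) + 1) ^ n) * hch

lemma st_one_eq_zero (k : ℕ) (h : 2 ≤ k) : st 1 k = 0 := by
  match k, h with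
  | k + 2, _ =>
    have : st 1 (k+2) = st 0 (k+1) + (k+2) * st 0 (k+2) := st_succ 0 (k+1)
    rw [this, st_zero_succ, st_zero_succ]; ring

lemma st_mod_p (p : ℕ) (hp : p.Prime) (k : ℕ) (h2 : 2 ≤ k) (hkp : k < p) :
    ((st p k : ℕ) : ZMod p) = 0 := by
  haveI := Fact.mk hp
  have hfac : ((k.factorial : ℕ) : ZMod p) ≠ 0 := by
    rw [Ne, ZMod.natCast_eq_zero_iff]
    intro h
    exact absurd ((Nat.Prime.dvd_factorial hp).mp h) (by omega)
  have h1 := congrArg (fun z : ℤ => ((z : ℤ) : ZMod p)) (st_formula p k)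
  have h2' := congrArg (fun z : ℤ => ((z : ℤ) : ZMod p)) (st_formula 1 k)
  simp only [Int.cast_mul, Int.cast_natCast, Int.cast_sum, Int.cast_pow, Int.cast_neg,
    Int.cast_one] at h1 h2'
  rw [st_one_eq_zero k h2] at h2'
  have hsame : ∀ j ∈ Finset.range (k+1),
      (-1 : ZMod p) ^ (k - j) * (k.choose j) * (j : ZMod p) ^ p
      = (-1 : ZMod p) ^ (k - j) * (k.choose j) * (j : ZMod p) ^ 1 := by
    intro j _
    rw [ZMod.pow_card, pow_one]
  rw [Finset.sum_congr rfl hsame] at h1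
  rw [← h2'] at h1
  simp only [Nat.cast_zero, mul_zero] at h1
  exact (mul_eq_zero.mp h1).resolve_left hfac

lemma touchard_map_p (p : ℕ) (hp : p.Prime) :
    (touchard p).map (Int.castRingHom (ZMod p)) = X ^ p + X := by
  haveI := Fact.mk hp
  have h2p : 2 ≤ p := hp.two_le
  rw [touchard_eq, Polynomial.map_sum]
  have h : ∀ k ∈ Finset.range (p + 1),
      ((C (st p k : ℤ) * X ^ k : ℤ[X])).map (Int.castRingHom (ZMod p))
      = (if k = p then X ^ p else 0) + (if k = 1 then X else 0) := by
    intro k hk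
    have hk' : k ≤ p := by have := Finset.mem_range.mp hk; omega
    rw [Polynomial.map_mul, Polynomial.map_pow, Polynomial.map_C, Polynomial.map_X]
    simp only [Int.coe_castRingHom, Int.cast_natCast]
    rcases Nat.lt_or_ge k 2 with hlt | hge
    · interval_cases k
      · obtain ⟨q, rfl⟩ : ∃ q, p = q + 1 := ⟨p - 1, by omega⟩
        rw [st_zero]
        simp
      · obtain ⟨q, rfl⟩ : ∃ q, p = q + 1 := ⟨p - 1, by omega⟩
        rw [st_one]
        rw [if_neg (by omega), if_pos rfl]
        simp
    · rcases Nat.lt_or_ge k p with hkp | hge2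
      · rw [st_mod_p p hp k hge hkp]
        rw [if_neg (by omega), if_neg (by omega)]
        simp
      · have : k = p := by omega
        subst this
        rw [st_self]
        rw [if_pos rfl, if_neg (by omega)]
        simp
  rw [Finset.sum_congr rfl h, Finset.sum_add_distrib]
  rw [Finset.sum_ite_eq' (Finset.range (p+1)) p (fun _ => (X:(ZMod p)[X]) ^ p)]
  rw [Finset.sum_ite_eq' (Finset.range (p+1)) 1 (fun _ => (X:(ZMod p)[X]))]
  rw [if_pos (Finset.mem_range.mpr (by omega)), if_pos (Finset.mem_range.mpr (by omega))]

lemma deriv_add_self_eq_zero {R : Type*} [CommRing R] (H : R[X])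
    (h : derivative H + H = 0) : H = 0 := by
  by_contra h0
  have hd := congrArg (fun Q : R[X] => Q.coeff H.natDegree) h
  simp only [coeff_add, coeff_derivative, coeff_zero] at hd
  rw [Polynomial.coeff_natDegree_succ_eq_zero, zero_mul, zero_add] at hd
  exact h0 (Polynomial.leadingCoeff_eq_zero.mp hd)

lemma deriv_cancel {R : Type*} [CommRing R] (P Q : R[X])
    (h : derivative P + P = derivative Q + Q) : P = Q := by
  have : derivative (P - Q) + (P - Q) = 0 := by
    rw [derivative_sub]
    linear_combination h
  exact sub_eq_zero.mp (deriv_add_self_eq_zero _ this)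

lemma xderC {R : Type*} [CommRing R] (a : R) (k : ℕ) :
    (X : R[X]) * derivative (C a * X ^ k) = C (a * k) * X ^ k := by
  cases k with
  | zero => simp
  | succ k =>
    rw [derivative_C_mul, derivative_X_pow]
    push_cast
    rw [C_mul, pow_succ]
    ring

lemma main_ode (m p : ℕ) (hm : 0 < m) (hp : p.Prime) (hpm : ¬ p ∣ m) :
    X * derivative (∑ n ∈ Finset.Icc 1 (p - 1),
          C (((-(m : ZMod p))⁻¹) ^ n) * (touchard n).map (Int.castRingHom (ZMod p)))
      + X * (∑ n ∈ Finset.Icc 1 (p - 1),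
          C (((-(m : ZMod p))⁻¹) ^ n) * (touchard n).map (Int.castRingHom (ZMod p)))
      + C ((m : ZMod p)) * (∑ n ∈ Finset.Icc 1 (p - 1),
          C (((-(m : ZMod p))⁻¹) ^ n) * (touchard n).map (Int.castRingHom (ZMod p)))
      = X ^ p := by
  haveI := Fact.mk hp
  have hp2 : 2 ≤ p := hp.two_le
  set c : ZMod p := (-(m : ZMod p))⁻¹ with hc
  set F := ∑ n ∈ Finset.Icc 1 (p - 1),
      C (c ^ n) * (touchard n).map (Int.castRingHom (ZMod p)) with hF
  have hm0 : (m : ZMod p) ≠ 0 := by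
    rw [Ne, ZMod.natCast_eq_zero_iff]; exact hpm
  have hneg : -(m : ZMod p) ≠ 0 := neg_ne_zero.mpr hm0
  have hcm : C (-(m : ZMod p)) * C c = 1 := by
    rw [hc, ← C_mul, mul_inv_cancel₀ hneg, C_1]
  have hc1 : c ^ (p - 1) = 1 := ZMod.pow_card_sub_one_eq_one (inv_ne_zero hneg)
  have hTrec : ∀ i : ℕ, (touchard (i + 1)).map (Int.castRingHom (ZMod p))
      = X * ((touchard i).map (Int.castRingHom (ZMod p))
        + derivative ((touchard i).map (Int.castRingHom (ZMod p)))) := by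
    intro i
    rw [touchard_rec, Polynomial.map_mul, Polynomial.map_add, Polynomial.map_X, derivative_map]
  set G := ∑ i ∈ Finset.range (p - 1),
      C (c ^ i) * (touchard i).map (Int.castRingHom (ZMod p)) with hG
  have hIcc : Finset.Icc 1 (p - 1) = Finset.Ico 1 p := by
    rw [← Finset.Ico_add_one_right_eq_Icc]; congr 1; omega
  have hdG : derivative G = ∑ i ∈ Finset.range (p - 1),
      C (c ^ i) * derivative ((touchard i).map (Int.castRingHom (ZMod p))) := by
    rw [hG, derivative_sum]
    refine Finset.sum_congr rfl fun i _ => ?_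
    rw [derivative_mul, derivative_C, zero_mul, zero_add]
  have hFG : F = C c * (X * (G + derivative G)) := by
    rw [hF, hIcc, Finset.sum_Ico_eq_sum_range]
    have hterm : ∀ i ∈ Finset.range (p - 1),
        C (c ^ (1 + i)) * (touchard (1 + i)).map (Int.castRingHom (ZMod p))
        = C c * (X * (C (c ^ i) * (touchard i).map (Int.castRingHom (ZMod p))
            + C (c ^ i) * derivative ((touchard i).map (Int.castRingHom (ZMod p))))) := by
      intro i _
      rw [add_comm 1 i, hTrec i, pow_succ, C_mul]
      ring
    rw [Finset.sum_congr rfl hterm, ← Finset.mul_sum]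
    have : ∑ i ∈ Finset.range (p - 1),
        (X * (C (c ^ i) * (touchard i).map (Int.castRingHom (ZMod p))
            + C (c ^ i) * derivative ((touchard i).map (Int.castRingHom (ZMod p)))))
        = X * (G + derivative G) := by
      rw [← Finset.mul_sum, Finset.sum_add_distrib, ← hdG, hG]
    rw [this]
  have hGF : G = 1 + F - (touchard (p - 1)).map (Int.castRingHom (ZMod p)) := by
    have h1 : ∑ i ∈ Finset.range p,
        C (c ^ i) * (touchard i).map (Int.castRingHom (ZMod p))
        = G + C (c ^ (p - 1)) * (touchard (p - 1)).map (Int.castRingHom (ZMod p)) := by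
      have hr : Finset.range p = Finset.range ((p - 1) + 1) := by
        congr 1
        omega
      rw [hG, hr, Finset.sum_range_succ
        (fun i => C (c ^ i) * (touchard i).map (Int.castRingHom (ZMod p))) (p - 1)]
    have h2 : ∑ i ∈ Finset.range p,
        C (c ^ i) * (touchard i).map (Int.castRingHom (ZMod p))
        = 1 + F := by
      rw [Finset.range_eq_Ico, Finset.sum_eq_sum_Ico_succ_bot hp.pos]
      rw [hF, hIcc]
      rw [pow_zero, C_1, one_mul, touchard_zero, Polynomial.map_one]
    rw [hc1, C_1, one_mul] at h1
    rw [h2] at h1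
    linear_combination -h1
  have hTp : X * ((touchard (p - 1)).map (Int.castRingHom (ZMod p))
      + derivative ((touchard (p - 1)).map (Int.castRingHom (ZMod p)))) = X ^ p + X := by
    have h := hTrec (p - 1)
    rw [show p - 1 + 1 = p from by omega] at h
    rw [← h, touchard_map_p p hp]
  have hFeq : F = C c * (X * F + X * derivative F - X ^ p) := by
    conv_lhs => rw [hFG]
    rw [hGF, derivative_sub, derivative_add, derivative_one, zero_add]
    linear_combination (-(C c)) * hTp
  have h2 : C (-(m : ZMod p)) * F = X * F + X * derivative F - X ^ p := by
    calc C (-(m : ZMod p)) * F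
        = C (-(m : ZMod p)) * (C c * (X * F + X * derivative F - X ^ p)) := by rw [← hFeq]
      _ = (C (-(m : ZMod p)) * C c) * (X * F + X * derivative F - X ^ p) := by ring
      _ = X * F + X * derivative F - X ^ p := by rw [hcm, one_mul]
  rw [C_neg] at h2
  linear_combination -h2

theorem touchard_sum_poly (m : ℕ) (hm : 0 < m) (p : ℕ) (hp : p.Prime) (hpm : ¬ p ∣ m) :
    (-(X : (ZMod p)[X])) ^ m *
        ∑ n ∈ Finset.Icc 1 (p - 1),
          C (((-(m : ZMod p))⁻¹) ^ n) * (touchard n).map (Int.castRingHom (ZMod p))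
      = -(X : (ZMod p)[X]) ^ p *
          ∑ l ∈ Finset.range m,
            C (((∏ s ∈ Finset.Icc (l + 1) (m - 1), s : ℕ) : ZMod p)) *
              (-(X : (ZMod p)[X])) ^ l := by
  haveI := Fact.mk hp
  obtain ⟨m', rfl⟩ : ∃ m', m = m' + 1 := ⟨m - 1, by omega⟩
  simp only [Nat.add_sub_cancel]
  have hODE := main_ode (m' + 1) p hm hp hpm
  set F := ∑ n ∈ Finset.Icc 1 (p - 1),
      C (((-((m' + 1 : ℕ) : ZMod p))⁻¹) ^ n) * (touchard n).map (Int.castRingHom (ZMod p))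
    with hF
  set A : ℕ → ZMod p := fun l => ((∏ s ∈ Finset.Icc (l + 1) m', s : ℕ) : ZMod p) with hAdef
  -- pull (-X)^l into C form
  have hnp : ∀ l : ℕ, (-(X : (ZMod p)[X])) ^ l = C ((-1 : ZMod p) ^ l) * X ^ l := by
    intro l
    rw [neg_pow, show ((-1 : (ZMod p)[X])) = C (-1) by simp, ← C_pow]
  have hQ : -(X : (ZMod p)[X]) ^ p * ∑ l ∈ Finset.range (m' + 1), C (A l) * (-(X : (ZMod p)[X])) ^ l
      = ∑ l ∈ Finset.range (m' + 1), C ((-1 : ZMod p) ^ (l + 1) * A l) * X ^ (p + l) := by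
    rw [Finset.mul_sum]
    refine Finset.sum_congr rfl fun l _ => ?_
    rw [hnp l]
    simp only [C_mul, C_pow, C_neg, C_1]
    ring
  rw [hQ]
  refine deriv_cancel _ _ (mul_left_cancel₀ Polynomial.X_ne_zero ?_)
  -- product recurrence
  have hA : ∀ l : ℕ, l + 1 ≤ m' → A l = ((l + 1 : ℕ) : ZMod p) * A (l + 1) := by
    intro l hl
    rw [hAdef]
    have h1 : Finset.Icc (l + 1) m' = Finset.Ico (l + 1) (m' + 1) := by
      rw [Finset.Ico_add_one_right_eq_Icc]
    have h2 : Finset.Icc (l + 2) m' = Finset.Ico (l + 2) (m' + 1) := by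
      rw [Finset.Ico_add_one_right_eq_Icc]
    simp only [h1, h2]
    have hnat : (∏ x ∈ Finset.Ico (l + 1) (m' + 1), x)
        = (l + 1) * ∏ x ∈ Finset.Ico (l + 2) (m' + 1), x :=
      Finset.prod_eq_prod_Ico_succ_bot (by omega) (fun x => x)
    rw [hnat]
    push_cast
    ring
  set g : ℕ → (ZMod p)[X] :=
    fun l => if l = 0 then 0 else C ((-1 : ZMod p) ^ l * A (l - 1)) * X ^ (p + l) with hg
  have hRt : ∀ l ∈ Finset.range (m' + 1),
      X * derivative (C ((-1 : ZMod p) ^ (l + 1) * A l) * X ^ (p + l))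
        + X * (C ((-1 : ZMod p) ^ (l + 1) * A l) * X ^ (p + l))
      = g (l + 1) - g l := by
    intro l hl
    rw [xderC]
    have hcast : ((-1 : ZMod p) ^ (l + 1) * A l) * ((p + l : ℕ) : ZMod p)
        = (-1 : ZMod p) ^ (l + 1) * A l * ((l : ℕ) : ZMod p) := by
      push_cast [ZMod.natCast_self]
      ring
    rw [hcast]
    cases l with
    | zero =>
      rw [hg]
      simp only [Nat.cast_zero, mul_zero, map_zero, zero_mul, zero_add, Nat.zero_add,
        Nat.add_zero, if_neg (Nat.one_ne_zero), if_pos rfl, ite_true, ite_false, sub_zero,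
        Nat.add_sub_cancel, pow_one]
      rw [show p + 1 = (p + 0) + 1 from rfl, pow_succ, show (1:ℕ) - 1 = 0 from rfl]
      ring
    | succ l' =>
      have hle : l' + 1 ≤ m' := by have := Finset.mem_range.mp hl; omega
      rw [hg]
      simp only [if_neg (Nat.succ_ne_zero _), Nat.add_sub_cancel]
      have hb : (-1 : ZMod p) ^ (l' + 1 + 1) * A (l' + 1) * ((l' + 1 : ℕ) : ZMod p)
          = -((-1 : ZMod p) ^ (l' + 1) * A l') := by
        rw [hA l' hle]
        push_cast
        ring
      rw [hb, C_neg]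
      have hx : X * (C ((-1 : ZMod p) ^ (l' + 1 + 1) * A (l' + 1)) * X ^ (p + (l' + 1)))
          = C ((-1 : ZMod p) ^ (l' + 1 + 1) * A (l' + 1)) * X ^ (p + (l' + 1 + 1)) := by
        rw [show p + (l' + 1 + 1) = (p + (l' + 1)) + 1 from by omega, pow_succ]
        ring
      rw [hx]
      ring
  -- RHS total
  have hR : X * (derivative (∑ l ∈ Finset.range (m' + 1),
        C ((-1 : ZMod p) ^ (l + 1) * A l) * X ^ (p + l))
      + ∑ l ∈ Finset.range (m' + 1), C ((-1 : ZMod p) ^ (l + 1) * A l) * X ^ (p + l))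
      = C ((-1 : ZMod p) ^ (m' + 1)) * X ^ (p + (m' + 1)) := by
    rw [derivative_sum, mul_add, Finset.mul_sum, Finset.mul_sum, ← Finset.sum_add_distrib]
    rw [Finset.sum_congr rfl hRt, Finset.sum_range_sub g (m' + 1)]
    rw [hg]
    simp only [if_pos rfl, if_neg (Nat.succ_ne_zero m'), sub_zero, Nat.add_sub_cancel]
    have : A m' = 1 := by
      rw [hAdef]
      simp only []
      rw [Finset.Icc_eq_empty (by omega), Finset.prod_empty, Nat.cast_one]
    rw [this, mul_one]
    simp
  -- LHS total
  have hL : X * (derivative ((-(X : (ZMod p)[X])) ^ (m' + 1) * F)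
      + (-(X : (ZMod p)[X])) ^ (m' + 1) * F)
      = C ((-1 : ZMod p) ^ (m' + 1)) * X ^ (p + (m' + 1)) := by
    rw [hnp (m' + 1), mul_assoc, derivative_C_mul, derivative_mul, derivative_X_pow]
    simp only [Nat.add_sub_cancel]
    push_cast
    push_cast at hODE
    linear_combination (C ((-1 : ZMod p) ^ (m' + 1)) * X ^ (m' + 1)) * hODE
  rw [hL, hR]
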